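/- Let T = conv{A₁,A₂,A₃} ⊂ ℝ² be a triangle with affinely independent vertices whose three interior angles are all at most π/2, let D be a point in the relative interior of e₁ = [A₂,A₃] and E a point in the relative interior of e₂ = [A₁,A₃], let K = conv{E,D,A₃}, let t be a unit vector parallel to D − E, n a unit vector orthogonal to t, x_T a point of [D,E], and let β₁ > 0, β₂ > 0. If a pair (φ₁,φ₂) ∈ RT × RT satisfies the IFE interface conditions and N₁(φ) = N₂(φ) = N₃(φ) = 0, then φ₁ = 0 and φ₂ = 0. Consequently a pair in RT × RT satisfying the IFE interface conditions is uniquely determined by its three degrees of freedom. -/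

import Mathlib

open Real MeasureTheory RealInnerProductSpace

noncomputable section

set_option maxHeartbeats 1000000

abbrev V2 : Type := EuclideanSpace ℝ (Fin 2)

/-- The lowest-order Raviart–Thomas shape function with data `(c, b)`: `x ↦ c + b • x`
(its divergence is the constant `2 * b`). -/
def rt (c : V2) (b : ℝ) : V2 → V2 := fun x => c + b • x

/-- Arclength line integral of a scalar function over the segment `[P, Q]`. -/
def lineInt (f : V2 → ℝ) (P Q : V2) : ℝ :=
  (∫ s in (0:ℝ)..1, f (P + s • (Q - P))) * ‖Q - P‖

/-- First degree of freedom of the piecewise pair `(φ₁, φ₂)` (with `φ₁` on `K` and `φ₂` on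
`T∖K`): `N₁(φ) = (1/|e₁|)(∫_{[A₂,D]} φ₂·n₁ ds + ∫_{[D,A₃]} φ₁·n₁ ds)`. -/
def dof1 (A₂ A₃ D n₁ : V2) (c₁ : V2) (b₁ : ℝ) (c₂ : V2) (b₂ : ℝ) : ℝ :=
  (1 / ‖A₃ - A₂‖) *
    (lineInt (fun x => ⟪rt c₂ b₂ x, n₁⟫) A₂ D + lineInt (fun x => ⟪rt c₁ b₁ x, n₁⟫) D A₃)

/-- `N₂(φ) = (1/|e₂|)(∫_{[A₁,E]} φ₂·n₂ ds + ∫_{[E,A₃]} φ₁·n₂ ds)`. -/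
def dof2 (A₁ A₃ E n₂ : V2) (c₁ : V2) (b₁ : ℝ) (c₂ : V2) (b₂ : ℝ) : ℝ :=
  (1 / ‖A₃ - A₁‖) *
    (lineInt (fun x => ⟪rt c₂ b₂ x, n₂⟫) A₁ E + lineInt (fun x => ⟪rt c₁ b₁ x, n₂⟫) E A₃)

/-- `N₃(φ) = (1/|e₃|) ∫_{[A₁,A₂]} φ₂·n₃ ds`. -/
def dof3 (A₁ A₂ n₃ : V2) (c₂ : V2) (b₂ : ℝ) : ℝ :=
  (1 / ‖A₂ - A₁‖) * lineInt (fun x => ⟪rt c₂ b₂ x, n₃⟫) A₁ A₂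

/-- The IFE interface conditions for the pair `(φ₁, φ₂) = (rt c₁ b₁, rt c₂ b₂)`:
(i) `⟨φ₁(x) - φ₂(x), n⟩ = 0` on the segment `[D, E]`;
(ii) `β₁⟨φ₁(x_T), t⟩ = β₂⟨φ₂(x_T), t⟩`;
(iii) `div φ₁ = div φ₂`. -/
def ifeCond (D E xT t n : V2) (β₁ β₂ : ℝ) (c₁ : V2) (b₁ : ℝ) (c₂ : V2) (b₂ : ℝ) : Prop :=
  (∀ x ∈ segment ℝ D E, ⟪rt c₁ b₁ x - rt c₂ b₂ x, n⟫ = 0) ∧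
    β₁ * ⟪rt c₁ b₁ xT, t⟫ = β₂ * ⟪rt c₂ b₂ xT, t⟫ ∧
    2 * b₁ = 2 * b₂

/- helper lemmas -/
lemma inner2' (x y : V2) : ⟪x, y⟫ = x 0 * y 0 + x 1 * y 1 := by
  simp [PiLp.inner_apply, Fin.sum_univ_two, RCLike.inner_apply, mul_comm]

lemma para' (a x y : V2) (ha : a ≠ 0) (hx : ⟪x, a⟫ = 0) (hy : ⟪y, a⟫ = 0) :
    ⟪x, x⟫ • y = ⟪y, x⟫ • x := by
  rw [inner2'] at hx hy
  have ha' : a 0 ≠ 0 ∨ a 1 ≠ 0 := by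
    by_contra h; push_neg at h
    exact ha (by ext i; fin_cases i <;> simp [h.1, h.2])
  have hcross : x 0 * y 1 - x 1 * y 0 = 0 := by
    rcases ha' with h | h
    · have h2 : (x 0 * y 1 - x 1 * y 0) * a 0 = 0 := by linear_combination y 1 * hx - x 1 * hy
      exact (mul_eq_zero.1 h2).resolve_right h
    · have h2 : (x 0 * y 1 - x 1 * y 0) * a 1 = 0 := by linear_combination (-(y 0)) * hx + x 0 * hy
      exact (mul_eq_zero.1 h2).resolve_right h
  rw [inner2' x x, inner2' y x]
  ext i
  fin_cases i <;> simp [inner2'] <;>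
    [linear_combination (-(x 1)) * hcross; linear_combination (x 0) * hcross]

lemma angle_inner_nonneg' (x y : V2) (h : InnerProductGeometry.angle x y ≤ π / 2) :
    0 ≤ ⟪x, y⟫ := by
  rw [InnerProductGeometry.angle, Real.arccos_le_pi_div_two] at h
  rcases eq_or_ne (‖x‖ * ‖y‖) 0 with h0 | h0
  · rcases mul_eq_zero.1 h0 with h0 | h0 <;> simp [norm_eq_zero.1 h0]
  · have hpos : 0 < ‖x‖ * ‖y‖ :=
      lt_of_le_of_ne (mul_nonneg (norm_nonneg x) (norm_nonneg y)) (Ne.symm h0)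
    have := mul_nonneg h hpos.le
    rwa [div_mul_cancel₀ _ h0] at this

lemma lineInt_rt' (c ν P Q : V2) (b : ℝ) (hperp : ⟪Q - P, ν⟫ = 0) :
    lineInt (fun x => ⟪rt c b x, ν⟫) P Q = (⟪c, ν⟫ + b * ⟪P, ν⟫) * ‖Q - P‖ := by
  unfold lineInt
  congr 1
  have h : ∀ s : ℝ, ⟪rt c b (P + s • (Q - P)), ν⟫ = ⟪c, ν⟫ + b * ⟪P, ν⟫ := by
    intro s
    simp [rt, inner_add_left, inner_smul_left, inner_add_right, real_inner_smul_right, hperp]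
  simp only [h]
  simp

lemma dof_pair_eq' (Aa Ab X ν c₁ c₂ : V2) (b₁ b₂ dd : ℝ)
    (hX : X = Aa + dd • (Ab - Aa)) (hd0 : 0 ≤ dd) (hd1 : dd ≤ 1)
    (hνe : ⟪Ab - Aa, ν⟫ = 0) (hne : Ab ≠ Aa) :
    (1 / ‖Ab - Aa‖) *
      (lineInt (fun x => ⟪rt c₂ b₂ x, ν⟫) Aa X + lineInt (fun x => ⟪rt c₁ b₁ x, ν⟫) X Ab)
    = dd * (⟪c₂, ν⟫ + b₂ * ⟪Aa, ν⟫) + (1 - dd) * (⟪c₁, ν⟫ + b₁ * ⟪Aa, ν⟫) := by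
  have hXA : X - Aa = dd • (Ab - Aa) := by rw [hX]; abel
  have hAX : Ab - X = (1 - dd) • (Ab - Aa) := by rw [hX]; module
  have hperp1 : ⟪X - Aa, ν⟫ = 0 := by rw [hXA, real_inner_smul_left, hνe]; ring
  have hperp2 : ⟪Ab - X, ν⟫ = 0 := by rw [hAX, real_inner_smul_left, hνe]; ring
  have hXν : ⟪X, ν⟫ = ⟪Aa, ν⟫ := by
    have := hperp1; rw [inner_sub_left] at this; linarith
  rw [lineInt_rt' _ _ _ _ _ hperp1, lineInt_rt' _ _ _ _ _ hperp2, hXν]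
  rw [hXA, hAX, norm_smul, norm_smul, Real.norm_eq_abs, Real.norm_eq_abs,
    abs_of_nonneg hd0, abs_of_nonneg (by linarith : (0:ℝ) ≤ 1 - dd)]
  have hL : ‖Ab - Aa‖ ≠ 0 := by simpa [sub_eq_zero] using hne
  field_simp


/-- Unisolvence (Lemma 4.3): under the maximum angle condition, a pair in `RT × RT`
satisfying the IFE interface conditions with vanishing degrees of freedom is zero;
consequently such a pair is uniquely determined by its degrees of freedom. -/
theorem stmt5 (A₁ A₂ A₃ D E t n xT n₁ n₂ n₃ : V2) (β₁ β₂ : ℝ)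
    (hA : AffineIndependent ℝ ![A₁, A₂, A₃])
    (hang1 : EuclideanGeometry.angle A₂ A₁ A₃ ≤ π / 2)
    (hang2 : EuclideanGeometry.angle A₁ A₂ A₃ ≤ π / 2)
    (hang3 : EuclideanGeometry.angle A₁ A₃ A₂ ≤ π / 2)
    (hD : D ∈ openSegment ℝ A₂ A₃) (hE : E ∈ openSegment ℝ A₁ A₃)
    (ht : ‖t‖ = 1) (htpar : ∃ c : ℝ, D - E = c • t)
    (hn : ‖n‖ = 1) (hnt : ⟪n, t⟫ = 0)
    (hxT : xT ∈ segment ℝ D E)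
    (hn₁ : ‖n₁‖ = 1) (hn₁e : ⟪n₁, A₃ - A₂⟫ = 0) (hn₁o : ⟪n₁, A₁ - A₂⟫ < 0)
    (hn₂ : ‖n₂‖ = 1) (hn₂e : ⟪n₂, A₃ - A₁⟫ = 0) (hn₂o : ⟪n₂, A₂ - A₁⟫ < 0)
    (hn₃ : ‖n₃‖ = 1) (hn₃e : ⟪n₃, A₂ - A₁⟫ = 0) (hn₃o : ⟪n₃, A₃ - A₁⟫ < 0)
    (hβ₁ : 0 < β₁) (hβ₂ : 0 < β₂) :
    (∀ (c₁ c₂ : V2) (b₁ b₂ : ℝ),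
        ifeCond D E xT t n β₁ β₂ c₁ b₁ c₂ b₂ →
        dof1 A₂ A₃ D n₁ c₁ b₁ c₂ b₂ = 0 →
        dof2 A₁ A₃ E n₂ c₁ b₁ c₂ b₂ = 0 →
        dof3 A₁ A₂ n₃ c₂ b₂ = 0 →
        rt c₁ b₁ = (fun _ => (0 : V2)) ∧ rt c₂ b₂ = (fun _ => (0 : V2))) ∧
      ∀ (c₁ c₂ d₁ d₂ : V2) (b₁ b₂ a₁ a₂ : ℝ),
        ifeCond D E xT t n β₁ β₂ c₁ b₁ c₂ b₂ →
        ifeCond D E xT t n β₁ β₂ d₁ a₁ d₂ a₂ →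
        dof1 A₂ A₃ D n₁ c₁ b₁ c₂ b₂ = dof1 A₂ A₃ D n₁ d₁ a₁ d₂ a₂ →
        dof2 A₁ A₃ E n₂ c₁ b₁ c₂ b₂ = dof2 A₁ A₃ E n₂ d₁ a₁ d₂ a₂ →
        dof3 A₁ A₂ n₃ c₂ b₂ = dof3 A₁ A₂ n₃ d₂ a₂ →
        rt c₁ b₁ = rt d₁ a₁ ∧ rt c₂ b₂ = rt d₂ a₂ := by
  -- extract parameters of D and E
  rw [openSegment_eq_image'] at hD hE
  obtain ⟨d, hdIoo, hDdef⟩ := hD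
  obtain ⟨e, heIoo, hEdef⟩ := hE
  replace hDdef : D = A₂ + d • (A₃ - A₂) := hDdef.symm
  replace hEdef : E = A₁ + e • (A₃ - A₁) := hEdef.symm
  obtain ⟨hd0, hd1⟩ := hdIoo
  obtain ⟨he0, he1⟩ := heIoo
  -- commuted normal facts
  have hv2n1 : 0 < ⟪A₂ - A₁, n₁⟫ := by
    have h := hn₁o
    rw [inner_sub_right] at h
    rw [inner_sub_left]
    have c1 : ⟪A₁, n₁⟫ = ⟪n₁, A₁⟫ := real_inner_comm _ _
    have c2 : ⟪A₂, n₁⟫ = ⟪n₁, A₂⟫ := real_inner_comm _ _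
    linarith
  have hn₁e' : ⟪A₃ - A₂, n₁⟫ = 0 := by rw [real_inner_comm]; exact hn₁e
  have hq : ⟪A₂ - A₁, n₂⟫ < 0 := by rw [real_inner_comm]; exact hn₂o
  have hn₂e' : ⟪A₃ - A₁, n₂⟫ = 0 := by rw [real_inner_comm]; exact hn₂e
  have hn₃e' : ⟪A₂ - A₁, n₃⟫ = 0 := by rw [real_inner_comm]; exact hn₃e
  have hn₃o' : ⟪A₃ - A₁, n₃⟫ < 0 := by rw [real_inner_comm]; exact hn₃o
  -- distinct vertices
  have hA32 : A₃ ≠ A₂ := by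
    intro h; rw [h] at hn₂e'; linarith
  have hA31 : A₃ ≠ A₁ := by
    intro h; rw [h, sub_self] at hn₃o'; simp at hn₃o'
  have hA21 : A₂ ≠ A₁ := by
    intro h; rw [h, sub_self] at hv2n1; simp at hv2n1
  -- angle facts
  have hQ0 : 0 ≤ ⟪A₂ - A₁, A₃ - A₁⟫ :=
    angle_inner_nonneg' _ _ (by simpa [EuclideanGeometry.angle, vsub_eq_sub] using hang1)
  have hPQraw : 0 ≤ ⟪A₁ - A₂, A₃ - A₂⟫ :=
    angle_inner_nonneg' _ _ (by simpa [EuclideanGeometry.angle, vsub_eq_sub] using hang2)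
  have hRQraw : 0 ≤ ⟪A₁ - A₃, A₂ - A₃⟫ :=
    angle_inner_nonneg' _ _ (by simpa [EuclideanGeometry.angle, vsub_eq_sub] using hang3)
  have hPQ : ⟪A₂ - A₁, A₃ - A₁⟫ ≤ ⟪A₂ - A₁, A₂ - A₁⟫ := by
    have hexp : ⟪A₁ - A₂, A₃ - A₂⟫ = ⟪A₂ - A₁, A₂ - A₁⟫ - ⟪A₂ - A₁, A₃ - A₁⟫ := by
      simp only [inner_sub_left, inner_sub_right]; ring
    linarith [hexp ▸ hPQraw]
  have hRQ : ⟪A₂ - A₁, A₃ - A₁⟫ ≤ ⟪A₃ - A₁, A₃ - A₁⟫ := by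
    have c12 : ⟪A₁, A₂⟫ = ⟪A₂, A₁⟫ := real_inner_comm _ _
    have c13 : ⟪A₁, A₃⟫ = ⟪A₃, A₁⟫ := real_inner_comm _ _
    have c32 : ⟪A₃, A₂⟫ = ⟪A₂, A₃⟫ := real_inner_comm _ _
    have hexp : ⟪A₁ - A₃, A₂ - A₃⟫ = ⟪A₃ - A₁, A₃ - A₁⟫ - ⟪A₂ - A₁, A₃ - A₁⟫ := by
      simp only [inner_sub_left, inner_sub_right]
      linear_combination c12 - c13 - c32
    linarith [hexp ▸ hRQraw]
  -- dof formulas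
  have hd1eq : ∀ (c₁ c₂ : V2) (b₁ b₂ : ℝ), dof1 A₂ A₃ D n₁ c₁ b₁ c₂ b₂ =
      d * (⟪c₂, n₁⟫ + b₂ * ⟪A₂, n₁⟫) + (1 - d) * (⟪c₁, n₁⟫ + b₁ * ⟪A₂, n₁⟫) :=
    fun c₁ c₂ b₁ b₂ => dof_pair_eq' A₂ A₃ D n₁ c₁ c₂ b₁ b₂ d hDdef hd0.le hd1.le hn₁e' hA32
  have hd2eq : ∀ (c₁ c₂ : V2) (b₁ b₂ : ℝ), dof2 A₁ A₃ E n₂ c₁ b₁ c₂ b₂ =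
      e * (⟪c₂, n₂⟫ + b₂ * ⟪A₁, n₂⟫) + (1 - e) * (⟪c₁, n₂⟫ + b₁ * ⟪A₁, n₂⟫) :=
    fun c₁ c₂ b₁ b₂ => dof_pair_eq' A₁ A₃ E n₂ c₁ c₂ b₁ b₂ e hEdef he0.le he1.le hn₂e' hA31
  have hd3eq : ∀ (c₂ : V2) (b₂ : ℝ), dof3 A₁ A₂ n₃ c₂ b₂ = ⟪c₂, n₃⟫ + b₂ * ⟪A₁, n₃⟫ := by
    intro c₂ b₂
    unfold dof3
    rw [lineInt_rt' _ _ _ _ _ hn₃e']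
    have hL : ‖A₂ - A₁‖ ≠ 0 := by simpa [sub_eq_zero] using hA21
    field_simp
  -- interface geometry
  obtain ⟨γ, hγdef⟩ := htpar
  have hDE : D - E = (1 - d) • (A₂ - A₁) + (d - e) • (A₃ - A₁) := by
    rw [hDdef, hEdef]; module
  have gtt : ⟪t, t⟫ = 1 := by
    rw [real_inner_self_eq_norm_mul_norm, ht]; ring
  have hn0 : n ≠ 0 := by
    intro h; rw [h] at hn; simp at hn
  have hn₃0 : n₃ ≠ 0 := by
    intro h; rw [h] at hn₃; simp at hn₃
  -- gamma relations
  have g1 : γ * ⟪t, n₁⟫ = (1 - e) * ⟪A₂ - A₁, n₁⟫ := by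
    have h := congrArg (fun v : V2 => ⟪v, n₁⟫) hγdef
    simp only [real_inner_smul_left] at h
    rw [hDE] at h
    simp only [inner_add_left, real_inner_smul_left] at h
    have h3 : ⟪A₃ - A₁, n₁⟫ = ⟪A₂ - A₁, n₁⟫ + ⟪A₃ - A₂, n₁⟫ := by
      rw [inner_sub_left, inner_sub_left, inner_sub_left]; ring
    rw [h3, hn₁e'] at h
    linarith [h]
  have g2 : γ * ⟪t, n₂⟫ = (1 - d) * ⟪A₂ - A₁, n₂⟫ := by
    have h := congrArg (fun v : V2 => ⟪v, n₂⟫) hγdef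
    simp only [real_inner_smul_left] at h
    rw [hDE] at h
    simp only [inner_add_left, real_inner_smul_left, hn₂e'] at h
    linarith [h]
  have g3 : γ * ⟪A₂ - A₁, t⟫ =
      (1 - d) * ⟪A₂ - A₁, A₂ - A₁⟫ + (d - e) * ⟪A₂ - A₁, A₃ - A₁⟫ := by
    have h := congrArg (fun v : V2 => ⟪A₂ - A₁, v⟫) hγdef
    simp only [real_inner_smul_right] at h
    rw [hDE] at h
    simp only [inner_add_right, real_inner_smul_right] at h
    linarith [h]
  have g4 : γ * γ = (1 - d) * ((1 - d) * ⟪A₂ - A₁, A₂ - A₁⟫ + (d - e) * ⟪A₂ - A₁, A₃ - A₁⟫)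
      + (d - e) * ((1 - d) * ⟪A₂ - A₁, A₃ - A₁⟫ + (d - e) * ⟪A₃ - A₁, A₃ - A₁⟫) := by
    have h2 : ⟪γ • t, γ • t⟫ = γ * γ := by
      rw [real_inner_smul_left, real_inner_smul_right, gtt]; ring
    have h3 : ⟪(1 - d) • (A₂ - A₁) + (d - e) • (A₃ - A₁),
        (1 - d) • (A₂ - A₁) + (d - e) • (A₃ - A₁)⟫
        = (1 - d) * ((1 - d) * ⟪A₂ - A₁, A₂ - A₁⟫)
          + (1 - d) * ((d - e) * ⟪A₂ - A₁, A₃ - A₁⟫)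
          + ((d - e) * ((1 - d) * ⟪A₂ - A₁, A₃ - A₁⟫)
          + (d - e) * ((d - e) * ⟪A₃ - A₁, A₃ - A₁⟫)) := by
      simp only [inner2', PiLp.add_apply, PiLp.smul_apply, PiLp.sub_apply, smul_eq_mul]
      ring
    rw [← h2, ← hγdef, hDE, h3]
    ring
  have hγ0 : γ ≠ 0 := by
    intro h
    rw [h, zero_smul] at hγdef
    have hz := congrArg (fun v : V2 => ⟪v, n₂⟫) (hγdef.symm.trans hDE)
    simp only [inner_add_left, real_inner_smul_left, hn₂e', inner_zero_left] at hz
    have h1d : (1:ℝ) - d ≠ 0 := by linarith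
    have hzz : (1 - d) * ⟪A₂ - A₁, n₂⟫ = 0 := by linarith [hz]
    rcases mul_eq_zero.1 hzz with h' | h'
    · exact h1d h'
    · linarith
  have hγ2 : 0 < γ * γ := mul_self_pos.mpr hγ0
  have hP : 0 < ⟪A₂ - A₁, A₂ - A₁⟫ := by
    rw [real_inner_self_eq_norm_mul_norm]
    have : (0:ℝ) < ‖A₂ - A₁‖ := by
      rw [norm_pos_iff]; simpa [sub_eq_zero] using hA21
    exact mul_pos this this
  -- positivity of the key factor
  have hFpos : 0 < β₁ * (γ * γ) - (β₁ - β₂) *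
      ((1 - d) * (1 - e) * ((1 - d) * ⟪A₂ - A₁, A₂ - A₁⟫ + (d - e) * ⟪A₂ - A₁, A₃ - A₁⟫)) := by
    have hZ0 : 0 ≤ (1 - d) * (1 - e) *
        ((1 - d) * ⟪A₂ - A₁, A₂ - A₁⟫ + (d - e) * ⟪A₂ - A₁, A₃ - A₁⟫) := by
      have i1 : 0 ≤ (1 - d) * (⟪A₂ - A₁, A₂ - A₁⟫ - ⟪A₂ - A₁, A₃ - A₁⟫) :=
        mul_nonneg (by linarith) (by linarith)
      have i2 : 0 ≤ (1 - e) * ⟪A₂ - A₁, A₃ - A₁⟫ := mul_nonneg (by linarith) hQ0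
      have : 0 ≤ (1 - d) * ⟪A₂ - A₁, A₂ - A₁⟫ + (d - e) * ⟪A₂ - A₁, A₃ - A₁⟫ := by
        linarith [i1, i2]
      exact mul_nonneg (mul_nonneg (by linarith) (by linarith)) this
    have hZle : (1 - d) * (1 - e) *
        ((1 - d) * ⟪A₂ - A₁, A₂ - A₁⟫ + (d - e) * ⟪A₂ - A₁, A₃ - A₁⟫) ≤ γ * γ := by
      have t1 : 0 ≤ e * ((1 - d) * (1 - d)) * (⟪A₂ - A₁, A₂ - A₁⟫ - ⟪A₂ - A₁, A₃ - A₁⟫) :=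
        mul_nonneg (mul_nonneg he0.le (mul_self_nonneg _)) (by linarith)
      have t2 : 0 ≤ ((d - e) * (d - e)) * (⟪A₃ - A₁, A₃ - A₁⟫ - ⟪A₂ - A₁, A₃ - A₁⟫) :=
        mul_nonneg (mul_self_nonneg _) (by linarith)
      have t3 : 0 ≤ d * ((1 - e) * (1 - e)) * ⟪A₂ - A₁, A₃ - A₁⟫ :=
        mul_nonneg (mul_nonneg hd0.le (mul_self_nonneg _)) hQ0
      linarith [g4, t1, t2, t3]
    rcases le_or_gt β₁ β₂ with hb | hb
    · linarith [mul_nonneg (by linarith : (0:ℝ) ≤ β₂ - β₁) hZ0, mul_pos hβ₁ hγ2]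
    · linarith [mul_nonneg (by linarith : (0:ℝ) ≤ β₁ - β₂)
        (by linarith : (0:ℝ) ≤ γ * γ - (1 - d) * (1 - e) *
          ((1 - d) * ⟪A₂ - A₁, A₂ - A₁⟫ + (d - e) * ⟪A₂ - A₁, A₃ - A₁⟫)),
        mul_pos hβ₂ hγ2]
  -- the key unisolvence statement
  have key : ∀ (c₁ c₂ : V2) (b₁ b₂ : ℝ),
      ifeCond D E xT t n β₁ β₂ c₁ b₁ c₂ b₂ →
      dof1 A₂ A₃ D n₁ c₁ b₁ c₂ b₂ = 0 →
      dof2 A₁ A₃ E n₂ c₁ b₁ c₂ b₂ = 0 →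
      dof3 A₁ A₂ n₃ c₂ b₂ = 0 →
      rt c₁ b₁ = (fun _ => (0 : V2)) ∧ rt c₂ b₂ = (fun _ => (0 : V2)) := by
    intro c₁ c₂ b₁ b₂ hife h1 h2 h3
    obtain ⟨hi, hii, hiii⟩ := hife
    have hb21 : b₂ = b₁ := by linarith
    subst hb21
    rw [hd1eq] at h1
    rw [hd2eq] at h2
    rw [hd3eq] at h3
    -- jump normal component
    have hw : ⟪c₁ - c₂, n⟫ = 0 := by
      have h := hi D (left_mem_segment ℝ D E)
      have hr : rt c₁ b₂ D - rt c₂ b₂ D = c₁ - c₂ := by simp only [rt]; abel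
      rwa [hr] at h
    obtain ⟨s, hct⟩ : ∃ s : ℝ, c₁ = c₂ + s • t := by
      refine ⟨⟪c₁ - c₂, t⟫, ?_⟩
      have hp := para' n t (c₁ - c₂) hn0 (by rw [real_inner_comm]; exact hnt) hw
      rw [gtt, one_smul] at hp
      rw [← hp]; abel
    obtain ⟨u, hu⟩ : ∃ u : V2, u = c₂ + b₂ • A₁ := ⟨_, rfl⟩
    have huc : ∀ ξ : V2, ⟪u, ξ⟫ = ⟪c₂, ξ⟫ + b₂ * ⟪A₁, ξ⟫ := by
      intro ξ; rw [hu, inner_add_left, real_inner_smul_left]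
    have hcc : ∀ ξ : V2, ⟪c₁, ξ⟫ = ⟪c₂, ξ⟫ + s * ⟪t, ξ⟫ := by
      intro ξ; rw [hct, inner_add_left, real_inner_smul_left]
    have hun : ⟪u, n₃⟫ = 0 := by
      rw [huc n₃]; linarith [h3]
    have hpu := para' n₃ (A₂ - A₁) u hn₃0 hn₃e' hun
    obtain ⟨μ, hμ⟩ : ∃ μ : ℝ, μ = ⟪u, A₂ - A₁⟫ := ⟨_, rfl⟩
    rw [← hμ] at hpu
    have hsc : ∀ ξ : V2, ⟪A₂ - A₁, A₂ - A₁⟫ * ⟪u, ξ⟫ = μ * ⟪A₂ - A₁, ξ⟫ := by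
      intro ξ
      have h := congrArg (fun v : V2 => ⟪v, ξ⟫) hpu
      simpa only [real_inner_smul_left] using h
    -- step equations
    have hstep1 : ⟪u, n₁⟫ + b₂ * ⟪A₂ - A₁, n₁⟫ + (1 - d) * s * ⟪t, n₁⟫ = 0 := by
      have e1 := huc n₁
      have e2 := hcc n₁
      have e3 : ⟪A₂ - A₁, n₁⟫ = ⟪A₂, n₁⟫ - ⟪A₁, n₁⟫ := inner_sub_left _ _ _
      linear_combination h1 + e1 + b₂ * e3 - (1 - d) * e2
    have hstep2 : ⟪u, n₂⟫ + (1 - e) * s * ⟪t, n₂⟫ = 0 := by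
      have e1 := huc n₂
      have e2 := hcc n₂
      linear_combination h2 + e1 - (1 - e) * e2
    have hEA : γ * μ * ⟪A₂ - A₁, n₁⟫ + γ * ⟪A₂ - A₁, A₂ - A₁⟫ * b₂ * ⟪A₂ - A₁, n₁⟫
        + ⟪A₂ - A₁, A₂ - A₁⟫ * (1 - d) * (1 - e) * s * ⟪A₂ - A₁, n₁⟫ = 0 := by
      have e1 := hsc n₁
      linear_combination γ * ⟪A₂ - A₁, A₂ - A₁⟫ * hstep1 - γ * e1
        - ⟪A₂ - A₁, A₂ - A₁⟫ * (1 - d) * s * g1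
    have hEB : γ * μ * ⟪A₂ - A₁, n₂⟫
        + ⟪A₂ - A₁, A₂ - A₁⟫ * (1 - d) * (1 - e) * s * ⟪A₂ - A₁, n₂⟫ = 0 := by
      have e1 := hsc n₂
      linear_combination γ * ⟪A₂ - A₁, A₂ - A₁⟫ * hstep2 - γ * e1
        - ⟪A₂ - A₁, A₂ - A₁⟫ * (1 - e) * s * g2
    have hmu : γ * μ + ⟪A₂ - A₁, A₂ - A₁⟫ * (1 - d) * (1 - e) * s = 0 := by
      have hcomb : (γ * μ + ⟪A₂ - A₁, A₂ - A₁⟫ * (1 - d) * (1 - e) * s) * ⟪A₂ - A₁, n₂⟫ = 0 := by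
        linear_combination hEB
      exact (mul_eq_zero.1 hcomb).resolve_right (ne_of_lt hq)
    -- b = 0
    have hb0 : b₂ = 0 := by
      have hfac : (γ * ⟪A₂ - A₁, A₂ - A₁⟫ * b₂) * ⟪A₂ - A₁, n₁⟫ = 0 := by
        linear_combination hEA - ⟪A₂ - A₁, n₁⟫ * hmu
      have h1' : γ * ⟪A₂ - A₁, A₂ - A₁⟫ * b₂ = 0 :=
        (mul_eq_zero.1 hfac).resolve_right (ne_of_gt hv2n1)
      rcases mul_eq_zero.1 h1' with h' | h'
      · exact absurd h' (mul_ne_zero hγ0 (ne_of_gt hP))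
      · exact h'
    subst hb0
    -- interface condition (ii)
    have hii' : β₁ * ⟪c₁, t⟫ = β₂ * ⟪c₂, t⟫ := by
      have e1 : rt c₁ 0 xT = c₁ := by simp [rt]
      have e2 : rt c₂ 0 xT = c₂ := by simp [rt]
      rwa [e1, e2] at hii
    have hE4 : (β₁ - β₂) * ⟪u, t⟫ + β₁ * s = 0 := by
      linear_combination hii' + (β₁ - β₂) * (huc t) - β₁ * (hcc t) - β₁ * s * gtt
    have hA4 : (β₁ - β₂) * ((γ * μ) * ((1 - d) * ⟪A₂ - A₁, A₂ - A₁⟫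
          + (d - e) * ⟪A₂ - A₁, A₃ - A₁⟫))
        + β₁ * s * ⟪A₂ - A₁, A₂ - A₁⟫ * (γ * γ) = 0 := by
      have e1 := hsc t
      linear_combination ⟪A₂ - A₁, A₂ - A₁⟫ * (γ * γ) * hE4 - (β₁ - β₂) * (γ * γ) * e1
        - (β₁ - β₂) * (γ * μ) * g3
    have hfin : (⟪A₂ - A₁, A₂ - A₁⟫ * s) * (β₁ * (γ * γ) - (β₁ - β₂) *
        ((1 - d) * (1 - e) * ((1 - d) * ⟪A₂ - A₁, A₂ - A₁⟫
          + (d - e) * ⟪A₂ - A₁, A₃ - A₁⟫))) = 0 := by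
      linear_combination hA4 - (β₁ - β₂) * ((1 - d) * ⟪A₂ - A₁, A₂ - A₁⟫
        + (d - e) * ⟪A₂ - A₁, A₃ - A₁⟫) * hmu
    have hs0 : s = 0 := by
      have h1' : ⟪A₂ - A₁, A₂ - A₁⟫ * s = 0 :=
        (mul_eq_zero.1 hfin).resolve_right (ne_of_gt hFpos)
      exact (mul_eq_zero.1 h1').resolve_left (ne_of_gt hP)
    have hμ0 : μ = 0 := by
      rw [hs0] at hmu
      have : γ * μ = 0 := by linarith [hmu]
      exact (mul_eq_zero.1 this).resolve_left hγ0
    have hu0 : u = 0 := by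
      rw [hμ0, zero_smul] at hpu
      rcases smul_eq_zero.1 hpu with h' | h'
      · exact absurd h' (ne_of_gt hP)
      · exact h'
    have hc20 : c₂ = 0 := by
      have := hu
      rw [hu0, zero_smul, add_zero] at this
      exact this.symm
    have hc10 : c₁ = 0 := by
      rw [hct, hs0, hc20, zero_smul, add_zero]
    constructor <;> funext x <;> simp [rt, hc10, hc20]
  refine ⟨key, ?_⟩
  intro c₁ c₂ d₁ d₂ b₁ b₂ a₁ a₂ hifeA hifeB h1 h2 h3
  have hsub : ∀ (cc dd : V2) (bb aa : ℝ) (x : V2),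
      rt (cc - dd) (bb - aa) x = rt cc bb x - rt dd aa x := by
    intro cc dd bb aa x; simp only [rt]; module
  have hife : ifeCond D E xT t n β₁ β₂ (c₁ - d₁) (b₁ - a₁) (c₂ - d₂) (b₂ - a₂) := by
    refine ⟨?_, ?_, ?_⟩
    · intro x hx
      have hA' := hifeA.1 x hx
      have hB' := hifeB.1 x hx
      rw [hsub, hsub]
      have hre : rt c₁ b₁ x - rt d₁ a₁ x - (rt c₂ b₂ x - rt d₂ a₂ x)
          = rt c₁ b₁ x - rt c₂ b₂ x - (rt d₁ a₁ x - rt d₂ a₂ x) := by abel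
      rw [hre, inner_sub_left, hA', hB', sub_zero]
    · rw [hsub, hsub, inner_sub_left, inner_sub_left]
      linear_combination hifeA.2.1 - hifeB.2.1
    · have e1 := hifeA.2.2
      have e2 := hifeB.2.2
      linarith
  have hD1 : dof1 A₂ A₃ D n₁ (c₁ - d₁) (b₁ - a₁) (c₂ - d₂) (b₂ - a₂) = 0 := by
    simp only [hd1eq, inner_sub_left] at h1 ⊢
    linear_combination h1
  have hD2 : dof2 A₁ A₃ E n₂ (c₁ - d₁) (b₁ - a₁) (c₂ - d₂) (b₂ - a₂) = 0 := by
    simp only [hd2eq, inner_sub_left] at h2 ⊢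
    linear_combination h2
  have hD3 : dof3 A₁ A₂ n₃ (c₂ - d₂) (b₂ - a₂) = 0 := by
    simp only [hd3eq, inner_sub_left] at h3 ⊢
    linear_combination h3
  obtain ⟨k1, k2⟩ := key (c₁ - d₁) (c₂ - d₂) (b₁ - a₁) (b₂ - a₂) hife hD1 hD2 hD3
  constructor
  · funext x
    have hx := congrFun k1 x
    rw [hsub] at hx
    exact sub_eq_zero.1 hx
  · funext x
    have hx := congrFun k2 x
    rw [hsub] at hx
    exact sub_eq_zero.1 hx
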